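/- For an inverse system (M_n)_{n ≥ 1} of S-modules with S-linear transition maps π_{l,k} : M_l → M_k for k ≤ l, where 𝔞^n M_n = 0 for all n, the following are equivalent: (1) every M_n is a finitely generated S-module and for all k ≤ l the map induced by π_{l,k} from M_l/𝔞^k M_l to M_k is an isomorphism; (2) M_1 is a finitely generated S-module and for all k ≤ l the sequence 0 → 𝔞^k M_l → M_l → M_k → 0 is exact, i.e. π_{l,k} is surjective with kernel exactly 𝔞^k M_l. -/

import Mathlib

noncomputable section

private lemma finite_of_quot_aux {S : Type*} [CommRing S] (𝔞 : Ideal S)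
    {M : Type*} [AddCommGroup M] [Module S M] {n : ℕ}
    (hann : (𝔞 ^ (n + 1) • ⊤ : Submodule S M) = ⊥)
    (hfin : Module.Finite S (M ⧸ (𝔞 • ⊤ : Submodule S M))) :
    Module.Finite S M := by
  obtain ⟨s, hs⟩ := hfin.fg_top
  choose g hg using Submodule.mkQ_surjective (𝔞 • ⊤ : Submodule S M)
  set N : Submodule S M := Submodule.span S (g '' ↑s) with hN
  have hmap : Submodule.map (Submodule.mkQ (𝔞 • ⊤ : Submodule S M)) N = ⊤ := by
    rw [hN, Submodule.map_span, Set.image_image]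
    simpa only [hg, Set.image_id'] using hs
  have hsup : (𝔞 • ⊤ : Submodule S M) ⊔ N = ⊤ :=
    (Submodule.map_mkQ_eq_top _ _).1 hmap
  have key : ∀ j : ℕ, (⊤ : Submodule S M) ≤ N ⊔ (𝔞 ^ (j + 1) • ⊤ : Submodule S M) := by
    intro j
    induction j with
    | zero => rw [pow_one, sup_comm]; exact hsup.ge
    | succ j ih =>
      have htop : (⊤ : Submodule S M) = N ⊔ (𝔞 ^ (j + 1) • ⊤ : Submodule S M) :=
        le_antisymm ih le_top
      calc (⊤ : Submodule S M) = N ⊔ 𝔞 • ⊤ := hsup.symm.trans (sup_comm _ _)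
        _ = N ⊔ 𝔞 • (N ⊔ (𝔞 ^ (j + 1) • ⊤ : Submodule S M)) := by rw [← htop]
        _ = N ⊔ (𝔞 • N ⊔ 𝔞 • (𝔞 ^ (j + 1) • ⊤ : Submodule S M)) := by
            rw [Submodule.smul_sup]
        _ ≤ N ⊔ (𝔞 ^ (j + 1 + 1) • ⊤ : Submodule S M) := by
            apply sup_le le_sup_left
            apply sup_le
            · exact le_trans Submodule.smul_le_right le_sup_left
            · have : (𝔞 ^ (j + 1 + 1) • ⊤ : Submodule S M) = 𝔞 • 𝔞 ^ (j + 1) • ⊤ := by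
                rw [pow_succ', mul_smul]
              rw [this]
              exact le_sup_right
  have hNtop : N = ⊤ := by
    refine le_antisymm le_top ?_
    have := key n
    rwa [hann, sup_bot_eq] at this
  refine ⟨?_⟩
  rw [← hNtop]
  exact Submodule.fg_span ((s.finite_toSet).image g)

/-- Given an inverse system `(M n)` (where `M n` plays the role of "`M_{n+1}`", so that the
`n`-th module is annihilated by `𝔞^(n+1)`), the map `M_l/𝔞^(k+1) M_l → M_k` induced by the
transition map `π_{l,k}`. -/
noncomputable def piInduced (S : Type*) [CommRing S] (𝔞 : Ideal S)
    (M : ℕ → Type*) [∀ n, AddCommGroup (M n)] [∀ n, Module S (M n)]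
    (π : ∀ k l, k ≤ l → (M l →ₗ[S] M k))
    (hann : ∀ n, (𝔞 ^ (n + 1) • ⊤ : Submodule S (M n)) = ⊥)
    (k l : ℕ) (h : k ≤ l) :
    (M l ⧸ (𝔞 ^ (k + 1) • ⊤ : Submodule S (M l))) →ₗ[S] M k :=
  Submodule.liftQ _ (π k l h)
    (by
      refine Submodule.smul_le.2 fun r hr m _ => ?_
      rw [LinearMap.mem_ker, map_smul]
      have hm : r • (π k l h) m ∈ (𝔞 ^ (k + 1) • ⊤ : Submodule S (M k)) :=
        Submodule.smul_mem_smul hr Submodule.mem_top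
      rw [hann k] at hm
      simpa using hm)

/-- for an inverse system `(M_n)_{n ≥ 1}` of `S`-modules (here `M n` denotes
`M_{n+1}`, so `𝔞^(n+1) (M n) = 0`), the following are equivalent:
(1) every `M_n` is finitely generated and all the induced maps `M_l/𝔞^k M_l → M_k` are
isomorphisms; (2) `M_1` is finitely generated and each `π_{l,k}` is surjective with kernel
exactly `𝔞^k M_l`. -/
theorem stmt11 (S : Type*) [CommRing S] [IsNoetherianRing S] (𝔞 : Ideal S)
    (M : ℕ → Type*) [∀ n, AddCommGroup (M n)] [∀ n, Module S (M n)]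
    (π : ∀ k l, k ≤ l → (M l →ₗ[S] M k))
    (hπ_refl : ∀ n, π n n le_rfl = LinearMap.id)
    (hπ_comp : ∀ k l m (hkl : k ≤ l) (hlm : l ≤ m),
      (π k l hkl).comp (π l m hlm) = π k m (hkl.trans hlm))
    (hann : ∀ n, (𝔞 ^ (n + 1) • ⊤ : Submodule S (M n)) = ⊥) :
    ((∀ n, Module.Finite S (M n)) ∧
      ∀ k l (h : k ≤ l), Function.Bijective (piInduced S 𝔞 M π hann k l h)) ↔
    (Module.Finite S (M 0) ∧
      ∀ k l (h : k ≤ l), Function.Surjective (π k l h) ∧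
        LinearMap.ker (π k l h) = (𝔞 ^ (k + 1) • ⊤ : Submodule S (M l))) := by
  constructor
  · rintro ⟨hfin, hbij⟩
    refine ⟨hfin 0, fun k l h => ?_⟩
    have hπeq : π k l h =
        (piInduced S 𝔞 M π hann k l h).comp
          (Submodule.mkQ (𝔞 ^ (k + 1) • ⊤ : Submodule S (M l))) := by
      ext m; rfl
    constructor
    · rw [hπeq]
      exact (hbij k l h).2.comp (Submodule.mkQ_surjective _)
    · rw [hπeq, LinearMap.ker_comp,
        LinearMap.ker_eq_bot.2 (hbij k l h).1, Submodule.comap_bot,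
        Submodule.ker_mkQ]
  · rintro ⟨hfin0, hsk⟩
    have hfin : ∀ n, Module.Finite S (M n) := by
      intro n
      refine finite_of_quot_aux 𝔞 (hann n) ?_
      -- M n ⧸ 𝔞 • ⊤ ≃ M 0 via piInduced at k = 0
      have h0 : (0 : ℕ) ≤ n := Nat.zero_le n
      have hb : Function.Bijective (piInduced S 𝔞 M π hann 0 n h0) := by
        constructor
        · rw [← LinearMap.ker_eq_bot, piInduced, Submodule.ker_liftQ,
            (hsk 0 n h0).2, Submodule.mkQ_map_self]
        · intro x
          obtain ⟨m, hm⟩ := (hsk 0 n h0).1 x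
          exact ⟨Submodule.mkQ _ m, hm⟩
      have e : (M n ⧸ (𝔞 ^ (0 + 1) • ⊤ : Submodule S (M n))) ≃ₗ[S] M 0 :=
        LinearEquiv.ofBijective _ hb
      have heq : (𝔞 ^ (0 + 1) • ⊤ : Submodule S (M n)) = (𝔞 • ⊤ : Submodule S (M n)) := by
        rw [zero_add, pow_one]
      exact Module.Finite.equiv ((Submodule.quotEquivOfEq _ _ heq).symm.trans e).symm
    refine ⟨hfin, fun k l h => ?_⟩
    constructor
    · rw [← LinearMap.ker_eq_bot, piInduced, Submodule.ker_liftQ,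
        (hsk k l h).2, Submodule.mkQ_map_self]
    · intro x
      obtain ⟨m, hm⟩ := (hsk k l h).1 x
      exact ⟨Submodule.mkQ _ m, hm⟩

end
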